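/- arXiv:1204.5309 — 3 statements merged into one kernel-verified Lean document; each statement's English description precedes it below -/
import Mathlib

section
/- Let X be an n×k real matrix with 1 < n ≤ k such that X has full rank n and every column of X has unit Euclidean norm. Then 0 < det((1/k)·X·Xᵀ) ≤ (1/n)^n. -/
open Matrix

theorem stmt_0 {n k : ℕ} (hn : 1 < n) (hnk : n ≤ k)
    (X : Matrix (Fin n) (Fin k) ℝ)
    (hrank : X.rank = n)
    (hcol : ∀ j, ∑ i, X i j ^ 2 = 1) :
    0 < ((1 / (k : ℝ)) • (X * Xᵀ)).det ∧
      ((1 / (k : ℝ)) • (X * Xᵀ)).det ≤ (1 / (n : ℝ)) ^ n := by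
  have hk0 : 0 < (k : ℝ) := by exact_mod_cast Nat.lt_of_lt_of_le (Nat.lt_of_lt_of_le Nat.zero_lt_one hn.le) hnk
  have hn0 : 0 < (n : ℝ) := by exact_mod_cast Nat.lt_of_lt_of_le Nat.zero_lt_one hn.le
  set A := X * Xᵀ with hA_def
  have hA : A.IsHermitian := by
    simpa using Matrix.isHermitian_mul_conjTranspose_self X
  -- eigenvalues nonneg
  have hpsd : A.PosSemidef := by
    simpa using Matrix.posSemidef_self_mul_conjTranspose X
  have heig_nonneg : ∀ i, 0 ≤ hA.eigenvalues i := hpsd.eigenvalues_nonneg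
  -- all eigenvalues nonzero
  have hrankA : A.rank = n := by
    rw [hA_def, Matrix.rank_self_mul_transpose, hrank]
  have heig_ne : ∀ i, hA.eigenvalues i ≠ 0 := by
    intro i hi
    have hcard := hA.rank_eq_card_non_zero_eigs
    rw [hrankA] at hcard
    have : Fintype.card {j // hA.eigenvalues j ≠ 0} < Fintype.card (Fin n) :=
      Fintype.card_subtype_lt (x := i) (by simp [hi])
    simp [← hcard] at this
  have heig_pos : ∀ i, 0 < hA.eigenvalues i := fun i =>
    lt_of_le_of_ne (heig_nonneg i) (Ne.symm (heig_ne i))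
  -- det = product of eigenvalues
  have hdet : A.det = ∏ i, hA.eigenvalues i := by
    have := hA.det_eq_prod_eigenvalues
    simpa using this
  -- trace = sum of eigenvalues
  have htrace : A.trace = ∑ i, hA.eigenvalues i := by
    nth_rewrite 1 [hA.spectral_theorem]
    rw [Unitary.conjStarAlgAut_apply]
    rw [Matrix.trace_mul_cycle]
    rw [Matrix.mem_unitaryGroup_iff'.mp (hA.eigenvectorUnitary).2]
    simp [Matrix.trace_diagonal]
  -- trace = k
  have htracek : A.trace = (k : ℝ) := by
    rw [hA_def]
    simp only [Matrix.trace, Matrix.diag, Matrix.mul_apply, Matrix.transpose_apply]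
    rw [Finset.sum_comm]
    have : ∀ j : Fin k, ∑ i : Fin n, X i j * X i j = 1 := by
      intro j
      have := hcol j
      simpa [sq] using this
    simp [this]
  have hsum : ∑ i, hA.eigenvalues i = (k : ℝ) := by rw [← htrace, htracek]
  -- AM-GM : prod ≤ (k/n)^n
  have hamgm : ∏ i, hA.eigenvalues i ≤ ((k : ℝ) / n) ^ n := by
    have h := Real.geom_mean_le_arith_mean (Finset.univ : Finset (Fin n))
      (fun _ => 1) hA.eigenvalues (fun _ _ => zero_le_one)
      (by simp [hn0]) (fun i _ => heig_nonneg i)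
    simp only [one_mul, Real.rpow_one, Finset.sum_const, Finset.card_univ,
      Fintype.card_fin, nsmul_eq_mul, mul_one] at h
    rw [hsum] at h
    have hprod_nonneg : 0 ≤ ∏ i, hA.eigenvalues i :=
      Finset.prod_nonneg fun i _ => heig_nonneg i
    have h2 : ((∏ i, hA.eigenvalues i) ^ ((n : ℝ))⁻¹) ^ n ≤ ((k : ℝ) / n) ^ n := by
      apply pow_le_pow_left₀ (Real.rpow_nonneg hprod_nonneg _) h
    rwa [← Real.rpow_natCast ((∏ i, hA.eigenvalues i) ^ ((n : ℝ))⁻¹) n,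
      ← Real.rpow_mul hprod_nonneg, inv_mul_cancel₀ (ne_of_gt hn0),
      Real.rpow_one] at h2
  have hdetA_pos : 0 < A.det := by
    rw [hdet]; exact Finset.prod_pos fun i _ => heig_pos i
  have hdet_smul : ((1 / (k : ℝ)) • A).det = (1 / (k : ℝ)) ^ n * A.det := by
    rw [Matrix.det_smul]; simp
  constructor
  · rw [hdet_smul]
    positivity
  · rw [hdet_smul, hdet]
    calc (1 / (k : ℝ)) ^ n * ∏ i, hA.eigenvalues i
        ≤ (1 / (k : ℝ)) ^ n * ((k : ℝ) / n) ^ n := by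
          apply mul_le_mul_of_nonneg_left hamgm (by positivity)
      _ = (1 / (n : ℝ)) ^ n := by
          rw [← mul_pow]
          congr 1
          field_simp
end

section
/- Let Ω ∈ ℝ^{k×n} be a matrix whose transpose lies in OB(n,k) (so its rows have unit norm and it has full column rank n), and suppose Ω minimizes h(Ω) = -(1/(n log n))·log det((1/k)·ΩᵀΩ) over all such matrices. Then all singular values of Ω are equal, i.e., its condition number is 1. -/
open Matrix

open Finset Real

lemma sum_exp_eq (k : ℕ) (hk : 0 < k) (a : ℤ) :
    ∑ m ∈ Finset.range k, Complex.exp (2 * Real.pi * Complex.I * m * a / k)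
      = if (k:ℤ) ∣ a then (k:ℂ) else 0 := by
  have hk0 : (k:ℂ) ≠ 0 := Nat.cast_ne_zero.mpr hk.ne'
  have hterm : ∀ m : ℕ, Complex.exp (2 * Real.pi * Complex.I * m * a / k)
      = Complex.exp (2 * Real.pi * Complex.I * a / k) ^ m := by
    intro m
    rw [← Complex.exp_nat_mul]
    ring_nf
  simp_rw [hterm]
  set z := Complex.exp (2 * Real.pi * Complex.I * a / k) with hz
  have hzk : z ^ k = 1 := by
    rw [← Complex.exp_nat_mul]
    have : (k:ℂ) * (2 * Real.pi * Complex.I * a / k) = a * (2 * Real.pi * Complex.I) := by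
      field_simp
    rw [this, Complex.exp_int_mul_two_pi_mul_I]
  by_cases hdvd : (k:ℤ) ∣ a
  · obtain ⟨t, ht⟩ := id hdvd
    have h1 : z = 1 := by
      rw [hz]
      have : 2 * (Real.pi:ℂ) * Complex.I * a / k = (t:ℤ) * (2 * Real.pi * Complex.I) := by
        rw [ht]; push_cast; field_simp
      rw [this, Complex.exp_int_mul_two_pi_mul_I]
    simp [h1, hdvd]
  · have hz1 : z ≠ 1 := by
      intro h
      rw [hz, Complex.exp_eq_one_iff] at h
      obtain ⟨t, ht⟩ := h
      apply hdvd
      refine ⟨t, ?_⟩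
      have hpi : (Real.pi : ℂ) ≠ 0 := by exact_mod_cast Real.pi_ne_zero
      have h2 : (2:ℂ) * Real.pi * Complex.I ≠ 0 := by
        simp [Complex.I_ne_zero, hpi]
      have : (a:ℂ) = k * t := by
        field_simp at ht
        have h3 : (a:ℂ) * (2 * Real.pi * Complex.I) = (k * t) * (2 * Real.pi * Complex.I) := by
          linear_combination (2 * Real.pi * Complex.I) * ht
        exact mul_right_cancel₀ h2 h3
      exact_mod_cast this
    rw [geom_sum_eq hz1, hzk]
    simp [hdvd]

lemma sum_cos_eq (k : ℕ) (hk : 0 < k) (a : ℤ) :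
    ∑ m ∈ Finset.range k, Real.cos (2 * Real.pi * m * a / k)
      = if (k:ℤ) ∣ a then (k:ℝ) else 0 := by
  have h := sum_exp_eq k hk a
  have he : ∀ m : ℕ, Real.cos (2 * Real.pi * m * a / k)
      = (Complex.exp (2 * Real.pi * Complex.I * m * a / k)).re := by
    intro m
    have : (2 * Real.pi * Complex.I * m * a / k) = ((2 * Real.pi * m * a / k : ℝ) : ℂ) * Complex.I := by
      push_cast; ring
    rw [this, Complex.exp_ofReal_mul_I_re]
  simp_rw [he, ← Complex.re_sum, h]
  split <;> simp

lemma sum_sin_eq (k : ℕ) (hk : 0 < k) (a : ℤ) :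
    ∑ m ∈ Finset.range k, Real.sin (2 * Real.pi * m * a / k) = 0 := by
  have h := sum_exp_eq k hk a
  have he : ∀ m : ℕ, Real.sin (2 * Real.pi * m * a / k)
      = (Complex.exp (2 * Real.pi * Complex.I * m * a / k)).im := by
    intro m
    have : (2 * Real.pi * Complex.I * m * a / k) = ((2 * Real.pi * m * a / k : ℝ) : ℂ) * Complex.I := by
      push_cast; ring
    rw [this, Complex.exp_ofReal_mul_I_im]
  simp_rw [he, ← Complex.im_sum, h]
  split <;> simp

noncomputable def tfe (n k m j : ℕ) : ℝ :=
  if j % 2 = 0 then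
    (if j + 1 = n then Real.sqrt (1/n)
     else Real.sqrt (2/n) * Real.cos (2 * Real.pi * m * ((j/2+1 : ℕ)) / k))
  else Real.sqrt (2/n) * Real.sin (2 * Real.pi * m * ((j/2+1 : ℕ)) / k)

lemma sum_range_pair (p : ℕ) (g : ℕ → ℝ) :
    ∑ j ∈ Finset.range (2*p), g j = ∑ l ∈ Finset.range p, (g (2*l) + g (2*l+1)) := by
  induction p with
  | zero => simp
  | succ p ih =>
    have h2 : 2 * (p+1) = (2*p + 1) + 1 := by ring
    rw [h2, Finset.sum_range_succ, Finset.sum_range_succ, ih, Finset.sum_range_succ]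
    exact add_assoc _ _ _

lemma tfe_row_norm (n k : ℕ) (hn : 1 < n) (m : ℕ) :
    ∑ j ∈ Finset.range n, (tfe n k m j)^2 = 1 := by
  have hn0 : (0:ℝ) < n := by positivity
  have h2n : (0:ℝ) ≤ 2/n := by positivity
  have hpair : ∀ l, l < n/2 → (tfe n k m (2*l))^2 + (tfe n k m (2*l+1))^2 = 2/n := by
    intro l hl
    have he : (2*l) % 2 = 0 := by omega
    have ho : ¬ ((2*l+1) % 2 = 0) := by omega
    have hne : ¬ (2*l + 1 = n) := by omega
    rw [tfe, tfe, if_pos he, if_neg hne, if_neg ho]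
    have hd1 : (2*l)/2 = l := by omega
    have hd2 : (2*l+1)/2 = l := by omega
    rw [hd1, hd2, mul_pow, mul_pow, Real.sq_sqrt h2n, ← mul_add,
      Real.cos_sq_add_sin_sq, mul_one]
  rcases Nat.even_or_odd n with he | ho
  all_goals first
    | (have hmod : n % 2 = 0 := Nat.even_iff.mp he)
    | (have hmod : n % 2 = 1 := Nat.odd_iff.mp ho)
  · have hn2 : 2*(n/2) = n := by omega
    rw [show Finset.range n = Finset.range (2*(n/2)) by rw [hn2], sum_range_pair,
      Finset.sum_congr rfl (fun l hl => hpair l (Finset.mem_range.mp hl)),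
      Finset.sum_const, Finset.card_range, nsmul_eq_mul]
    have hcast : ((n/2:ℕ):ℝ) * 2 = (n:ℝ) := by exact_mod_cast congrArg (Nat.cast (R := ℝ)) (by omega : (n/2) * 2 = n)
    rw [show ((n/2:ℕ):ℝ) * (2/(n:ℝ)) = (((n/2:ℕ):ℝ) * 2)/(n:ℝ) by ring, hcast]
    field_simp
  · have hn2 : 2*(n/2) + 1 = n := by omega
    rw [show Finset.range n = Finset.range (2*(n/2)+1) by rw [hn2], Finset.sum_range_succ,
      sum_range_pair,
      Finset.sum_congr rfl (fun l hl => hpair l (Finset.mem_range.mp hl)),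
      Finset.sum_const, Finset.card_range, nsmul_eq_mul]
    have hlast : tfe n k m (2*(n/2)) = Real.sqrt (1/n) := by
      rw [tfe, if_pos (by omega), if_pos (by omega)]
    rw [hlast, Real.sq_sqrt (by positivity)]
    have hcast : ((n/2:ℕ):ℝ) = ((n:ℝ)-1)/2 := by
      have : (n:ℝ) = 2*((n/2:ℕ):ℝ) + 1 := by exact_mod_cast (hn2.symm ▸ rfl : (n:ℕ) = 2*(n/2)+1)
      linarith
    rw [hcast]
    field_simp
    ring

lemma not_dvd_of_lt (k : ℕ) (a : ℤ) (ha : a ≠ 0) (hlt : a.natAbs < k) : ¬ (k:ℤ) ∣ a := by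
  intro hd
  have h1 : k ∣ a.natAbs := by
    have := Int.natAbs_dvd_natAbs.mpr hd
    simpa using this
  have := Nat.le_of_dvd (Int.natAbs_pos.mpr ha) h1
  omega

lemma tfe_gram (n k : ℕ) (hn : 1 < n) (hnk : n < k) (i j : ℕ) (hi : i < n) (hj : j < n) :
    ∑ m ∈ Finset.range k, tfe n k m i * tfe n k m j
      = if i = j then (k:ℝ)/n else 0 := by
  have hk : 0 < k := by omega
  have hn0 : (0:ℝ) < n := by exact_mod_cast Nat.zero_lt_of_lt hn
  -- frequency bound
  have hfreq : ∀ x, x < n → (x % 2 = 0 → ¬ (x + 1 = n) → 2*(x/2+1) ≤ n) ∧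
      (x % 2 = 1 → 2*(x/2+1) ≤ n + 1 ∧ x/2 + 1 ≤ n/2 + 1) := by
    intro x hx; constructor <;> intro h1 <;> [skip; skip] <;> first | (intro h2; omega) | omega
  -- angle rewriting
  have hangle : ∀ (a b : ℕ) (m : ℕ),
      (2 * Real.pi * m * (((a:ℤ) - b : ℤ) : ℝ) / k = 2*Real.pi*m*(a:ℕ)/k - 2*Real.pi*m*(b:ℕ)/k)
      ∧ (2 * Real.pi * m * (((a:ℤ) + b : ℤ) : ℝ) / k = 2*Real.pi*m*(a:ℕ)/k + 2*Real.pi*m*(b:ℕ)/k) := by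
    intro a b m
    constructor <;> (push_cast; ring)
  -- cos-cos product sums
  have prod_cc : ∀ f g : ℕ, 0 < f + g → f + g < k →
      ∑ m ∈ Finset.range k, Real.cos (2*Real.pi*m*(f:ℕ)/k) * Real.cos (2*Real.pi*m*(g:ℕ)/k)
        = if f = g then (k:ℝ)/2 else 0 := by
    intro f g hpos hlt
    have hterm : ∀ m ∈ Finset.range k, Real.cos (2*Real.pi*m*(f:ℕ)/k) * Real.cos (2*Real.pi*m*(g:ℕ)/k)
        = (Real.cos (2*Real.pi*m*(((f:ℤ)-g:ℤ):ℝ)/k) + Real.cos (2*Real.pi*m*(((f:ℤ)+g:ℤ):ℝ)/k))/2 := by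
      intro m _
      rw [(hangle f g m).1, (hangle f g m).2, Real.cos_sub, Real.cos_add]; ring
    rw [Finset.sum_congr rfl hterm, ← Finset.sum_div, Finset.sum_add_distrib,
      sum_cos_eq k hk, sum_cos_eq k hk]
    have hnd2 : ¬ ((k:ℤ) ∣ ((f:ℤ) + g)) := by
      apply not_dvd_of_lt k _ (by omega) (by omega)
    rw [if_neg hnd2]
    by_cases hfg : f = g
    · subst hfg
      rw [if_pos (by simp), if_pos rfl]
      ring
    · rw [if_neg (not_dvd_of_lt k _ (by omega) (by omega)), if_neg hfg]
      ring
  -- sin-sin product sums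
  have prod_ss : ∀ f g : ℕ, 0 < f + g → f + g < k →
      ∑ m ∈ Finset.range k, Real.sin (2*Real.pi*m*(f:ℕ)/k) * Real.sin (2*Real.pi*m*(g:ℕ)/k)
        = if f = g then (k:ℝ)/2 else 0 := by
    intro f g hpos hlt
    have hterm : ∀ m ∈ Finset.range k, Real.sin (2*Real.pi*m*(f:ℕ)/k) * Real.sin (2*Real.pi*m*(g:ℕ)/k)
        = (Real.cos (2*Real.pi*m*(((f:ℤ)-g:ℤ):ℝ)/k) - Real.cos (2*Real.pi*m*(((f:ℤ)+g:ℤ):ℝ)/k))/2 := by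
      intro m _
      rw [(hangle f g m).1, (hangle f g m).2, Real.cos_sub, Real.cos_add]; ring
    rw [Finset.sum_congr rfl hterm, ← Finset.sum_div, Finset.sum_sub_distrib,
      sum_cos_eq k hk, sum_cos_eq k hk]
    have hnd2 : ¬ ((k:ℤ) ∣ ((f:ℤ) + g)) := by
      apply not_dvd_of_lt k _ (by omega) (by omega)
    rw [if_neg hnd2]
    by_cases hfg : f = g
    · subst hfg
      rw [if_pos (by simp), if_pos rfl]
      ring
    · rw [if_neg (not_dvd_of_lt k _ (by omega) (by omega)), if_neg hfg]
      ring
  -- cos-sin product sums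
  have prod_cs : ∀ f g : ℕ,
      ∑ m ∈ Finset.range k, Real.cos (2*Real.pi*m*(f:ℕ)/k) * Real.sin (2*Real.pi*m*(g:ℕ)/k) = 0 := by
    intro f g
    have hterm : ∀ m ∈ Finset.range k, Real.cos (2*Real.pi*m*(f:ℕ)/k) * Real.sin (2*Real.pi*m*(g:ℕ)/k)
        = (Real.sin (2*Real.pi*m*(((f:ℤ)+g:ℤ):ℝ)/k) - Real.sin (2*Real.pi*m*(((f:ℤ)-g:ℤ):ℝ)/k))/2 := by
      intro m _
      rw [(hangle f g m).1, (hangle f g m).2, Real.sin_sub, Real.sin_add]; ring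
    rw [Finset.sum_congr rfl hterm, ← Finset.sum_div, Finset.sum_sub_distrib,
      sum_sin_eq k hk, sum_sin_eq k hk]
    ring
  -- single cos sum
  have sum_c : ∀ f : ℕ, 0 < f → f < k →
      ∑ m ∈ Finset.range k, Real.cos (2*Real.pi*m*(f:ℕ)/k) = 0 := by
    intro f h1 h2
    have : ∀ m ∈ Finset.range k, Real.cos (2*Real.pi*m*(f:ℕ)/k)
        = Real.cos (2*Real.pi*m*(((f:ℤ)):ℝ)/k) := by intro m _; norm_cast
    rw [Finset.sum_congr rfl this, sum_cos_eq k hk, if_neg (not_dvd_of_lt k _ (by omega) (by omega))]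
  have sum_s : ∀ f : ℕ,
      ∑ m ∈ Finset.range k, Real.sin (2*Real.pi*m*(f:ℕ)/k) = 0 := by
    intro f
    have : ∀ m ∈ Finset.range k, Real.sin (2*Real.pi*m*(f:ℕ)/k)
        = Real.sin (2*Real.pi*m*(((f:ℤ)):ℝ)/k) := by intro m _; norm_cast
    rw [Finset.sum_congr rfl this, sum_sin_eq k hk]
  have hsq : Real.sqrt (2/n) * Real.sqrt (2/n) = 2/n := Real.mul_self_sqrt (by positivity)
  have hsq1 : Real.sqrt (1/n) * Real.sqrt (1/n) = 1/n := Real.mul_self_sqrt (by positivity)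
  -- main case analysis
  by_cases hi2 : i % 2 = 0 <;> by_cases hj2 : j % 2 = 0
  · by_cases hic : i + 1 = n <;> by_cases hjc : j + 1 = n
    · -- both constant columns: i = j = n-1
      have hij : i = j := by omega
      subst hij
      simp only [tfe, if_pos hi2, if_pos hic, if_pos rfl]
      rw [Finset.sum_const, Finset.card_range, nsmul_eq_mul, hsq1]
      field_simp
      rw [if_pos trivial]; field_simp
    · -- i const, j cos, i ≠ j
      have hij : ¬ i = j := by omega
      simp only [tfe, if_pos hi2, if_pos hj2, if_pos hic, if_neg hjc, if_neg hij]
      have : ∀ m ∈ Finset.range k, Real.sqrt (1/n) * (Real.sqrt (2/n) * Real.cos (2*Real.pi*m*((j/2+1:ℕ))/k))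
          = (Real.sqrt (1/n) * Real.sqrt (2/n)) * Real.cos (2*Real.pi*m*((j/2+1:ℕ))/k) := by
        intro m _; ring
      rw [Finset.sum_congr rfl this, ← Finset.mul_sum, sum_c (j/2+1) (by omega) (by omega), mul_zero]
    · -- i cos, j const
      have hij : ¬ i = j := by omega
      simp only [tfe, if_pos hi2, if_pos hj2, if_neg hic, if_pos hjc, if_neg hij]
      have : ∀ m ∈ Finset.range k, (Real.sqrt (2/n) * Real.cos (2*Real.pi*m*((i/2+1:ℕ))/k)) * Real.sqrt (1/n)
          = (Real.sqrt (2/n) * Real.sqrt (1/n)) * Real.cos (2*Real.pi*m*((i/2+1:ℕ))/k) := by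
        intro m _; ring
      rw [Finset.sum_congr rfl this, ← Finset.mul_sum, sum_c (i/2+1) (by omega) (by omega), mul_zero]
    · -- both cos
      simp only [tfe, if_pos hi2, if_pos hj2, if_neg hic, if_neg hjc]
      have : ∀ m ∈ Finset.range k, (Real.sqrt (2/n) * Real.cos (2*Real.pi*m*((i/2+1:ℕ))/k)) * (Real.sqrt (2/n) * Real.cos (2*Real.pi*m*((j/2+1:ℕ))/k))
          = (2/n) * (Real.cos (2*Real.pi*m*((i/2+1:ℕ))/k) * Real.cos (2*Real.pi*m*((j/2+1:ℕ))/k)) := by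
        intro m _; rw [mul_mul_mul_comm, hsq]
      rw [Finset.sum_congr rfl this, ← Finset.mul_sum,
        prod_cc (i/2+1) (j/2+1) (by omega) (by omega)]
      by_cases hfg : i/2 + 1 = j/2 + 1
      · rw [if_pos hfg, if_pos (by omega)]
        field_simp
      · rw [if_neg hfg, if_neg (by omega), mul_zero]
  · -- i even, j odd
    have hij : ¬ i = j := by omega
    rw [if_neg hij]
    by_cases hic : i + 1 = n
    · simp only [tfe, if_pos hi2, if_neg hj2, if_pos hic]
      have : ∀ m ∈ Finset.range k, Real.sqrt (1/n) * (Real.sqrt (2/n) * Real.sin (2*Real.pi*m*((j/2+1:ℕ))/k))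
          = (Real.sqrt (1/n) * Real.sqrt (2/n)) * Real.sin (2*Real.pi*m*((j/2+1:ℕ))/k) := by
        intro m _; ring
      rw [Finset.sum_congr rfl this, ← Finset.mul_sum, sum_s (j/2+1), mul_zero]
    · simp only [tfe, if_pos hi2, if_neg hj2, if_neg hic]
      have : ∀ m ∈ Finset.range k, (Real.sqrt (2/n) * Real.cos (2*Real.pi*m*((i/2+1:ℕ))/k)) * (Real.sqrt (2/n) * Real.sin (2*Real.pi*m*((j/2+1:ℕ))/k))
          = (2/n) * (Real.cos (2*Real.pi*m*((i/2+1:ℕ))/k) * Real.sin (2*Real.pi*m*((j/2+1:ℕ))/k)) := by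
        intro m _; rw [mul_mul_mul_comm, hsq]
      rw [Finset.sum_congr rfl this, ← Finset.mul_sum, prod_cs (i/2+1) (j/2+1), mul_zero]
  · -- i odd, j even
    have hij : ¬ i = j := by omega
    rw [if_neg hij]
    by_cases hjc : j + 1 = n
    · simp only [tfe, if_neg hi2, if_pos hj2, if_pos hjc]
      have : ∀ m ∈ Finset.range k, (Real.sqrt (2/n) * Real.sin (2*Real.pi*m*((i/2+1:ℕ))/k)) * Real.sqrt (1/n)
          = (Real.sqrt (2/n) * Real.sqrt (1/n)) * Real.sin (2*Real.pi*m*((i/2+1:ℕ))/k) := by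
        intro m _; ring
      rw [Finset.sum_congr rfl this, ← Finset.mul_sum, sum_s (i/2+1), mul_zero]
    · simp only [tfe, if_neg hi2, if_pos hj2, if_neg hjc]
      have : ∀ m ∈ Finset.range k, (Real.sqrt (2/n) * Real.sin (2*Real.pi*m*((i/2+1:ℕ))/k)) * (Real.sqrt (2/n) * Real.cos (2*Real.pi*m*((j/2+1:ℕ))/k))
          = (2/n) * (Real.cos (2*Real.pi*m*((j/2+1:ℕ))/k) * Real.sin (2*Real.pi*m*((i/2+1:ℕ))/k)) := by
        intro m _; rw [mul_mul_mul_comm, hsq]; ring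
      rw [Finset.sum_congr rfl this, ← Finset.mul_sum, prod_cs (j/2+1) (i/2+1), mul_zero]
  · -- both odd
    simp only [tfe, if_neg hi2, if_neg hj2]
    have : ∀ m ∈ Finset.range k, (Real.sqrt (2/n) * Real.sin (2*Real.pi*m*((i/2+1:ℕ))/k)) * (Real.sqrt (2/n) * Real.sin (2*Real.pi*m*((j/2+1:ℕ))/k))
        = (2/n) * (Real.sin (2*Real.pi*m*((i/2+1:ℕ))/k) * Real.sin (2*Real.pi*m*((j/2+1:ℕ))/k)) := by
      intro m _; rw [mul_mul_mul_comm, hsq]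
    rw [Finset.sum_congr rfl this, ← Finset.mul_sum,
      prod_ss (i/2+1) (j/2+1) (by omega) (by omega)]
    by_cases hfg : i/2 + 1 = j/2 + 1
    · rw [if_pos hfg, if_pos (by omega)]
      field_simp
    · rw [if_neg hfg, if_neg (by omega), mul_zero]

lemma rank_of_gram {n k : ℕ} (Y : Matrix (Fin k) (Fin n) ℝ) (c : ℝ) (hc : c ≠ 0)
    (hg : Yᵀ * Y = c • (1 : Matrix (Fin n) (Fin n) ℝ)) : Y.rank = n := by
  have h := Matrix.rank_transpose_mul_self Y
  rw [hg] at h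
  have hu : IsUnit (c • (1 : Matrix (Fin n) (Fin n) ℝ)) := by
    rw [Matrix.isUnit_iff_isUnit_det, Matrix.det_smul, Matrix.det_one, mul_one]
    exact (pow_ne_zero _ hc).isUnit
  rw [Matrix.rank_of_isUnit _ hu, Fintype.card_fin] at h
  exact h.symm

lemma exists_tight_frame (n k : ℕ) (hn : 1 < n) (hnk : n ≤ k) :
    ∃ Y : Matrix (Fin k) (Fin n) ℝ, Y.rank = n ∧ (∀ i, ∑ j, Y i j ^ 2 = 1) ∧
      Yᵀ * Y = ((k:ℝ)/n) • (1 : Matrix (Fin n) (Fin n) ℝ) := by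
  have hk : 0 < k := by omega
  have hkn0 : ((k:ℝ)/n) ≠ 0 := by positivity
  rcases eq_or_lt_of_le hnk with heq | hlt
  · -- n = k : use "identity"
    set Y : Matrix (Fin k) (Fin n) ℝ := Matrix.of (fun m j => if (m:ℕ) = (j:ℕ) then (1:ℝ) else 0)
      with hY
    have hYa : ∀ (m : Fin k) (j : Fin n), Y m j = if (m:ℕ) = (j:ℕ) then (1:ℝ) else 0 :=
      fun m j => rfl
    have hgram : Yᵀ * Y = ((k:ℝ)/n) • (1 : Matrix (Fin n) (Fin n) ℝ) := by
      have hkn : (k:ℝ)/n = 1 := by rw [heq]; field_simp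
      ext i j
      rw [Matrix.mul_apply]
      simp only [Matrix.transpose_apply, Matrix.smul_apply, Matrix.one_apply, hkn, smul_eq_mul,
        one_mul, hYa]
      have hilt : (i:ℕ) < k := by omega
      rw [Finset.sum_eq_single (⟨(i:ℕ), hilt⟩ : Fin k)]
      · by_cases h : i = j
        · simp [h]
        · rw [if_pos rfl, if_neg (fun hv => h (Fin.ext hv)), if_neg h, one_mul]
      · intro b _ hb
        rw [if_neg (fun hv => hb (Fin.ext hv)), zero_mul]
      · intro h; exact absurd (Finset.mem_univ _) h
    refine ⟨Y, rank_of_gram _ _ hkn0 hgram, ?_, hgram⟩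
    intro m
    have hm : (m:ℕ) < n := by omega
    have hsq : ∀ j : Fin n, (Y m j)^2
        = if (⟨(m:ℕ), hm⟩ : Fin n) = j then (1:ℝ) else 0 := by
      intro j
      rw [hYa]
      by_cases h : (⟨(m:ℕ), hm⟩ : Fin n) = j
      · rw [if_pos (by rw [← h]), if_pos h, one_pow]
      · rw [if_neg (fun hv => h (Fin.ext hv)), if_neg h, zero_pow two_ne_zero]
    simp only [hsq]
    exact Finset.sum_ite_eq Finset.univ _ _ |>.trans (if_pos (Finset.mem_univ _))
  · set Y : Matrix (Fin k) (Fin n) ℝ := Matrix.of (fun m j => tfe n k m j) with hY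
    have hgram : Yᵀ * Y = ((k:ℝ)/n) • (1 : Matrix (Fin n) (Fin n) ℝ) := by
      ext i j
      rw [Matrix.mul_apply]
      simp only [Matrix.transpose_apply]
      rw [show (∑ x : Fin k, Y x i * Y x j) = ∑ x : Fin k, tfe n k x i * tfe n k x j from rfl]
      rw [Fin.sum_univ_eq_sum_range (fun m => tfe n k m i * tfe n k m j),
        tfe_gram n k hn hlt i j i.isLt j.isLt]
      simp only [Matrix.smul_apply, Matrix.one_apply, smul_eq_mul]
      by_cases h : i = j
      · rw [if_pos (by rw [h]), if_pos h, mul_one]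
      · rw [if_neg (fun hv => h (Fin.ext hv)), if_neg h, mul_zero]
    refine ⟨Y, rank_of_gram _ _ hkn0 hgram, ?_, hgram⟩
    intro m
    rw [show (∑ j : Fin n, Y m j ^ 2) = ∑ j : Fin n, tfe n k m j ^ 2 from rfl]
    rw [Fin.sum_univ_eq_sum_range (fun j => tfe n k m j ^ 2)]
    exact tfe_row_norm n k hn m

/-- Penalty function `h(Ω) = -(1/(n log n)) log det((1/k) ΩᵀΩ)` for `Ω : k × n`. -/
noncomputable def penaltyH {n k : ℕ} (Ω : Matrix (Fin k) (Fin n) ℝ) : ℝ :=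
  -(1 / ((n : ℝ) * Real.log n)) * Real.log (((1 / (k : ℝ)) • (Ωᵀ * Ω)).det)

theorem stmt_4 {n k : ℕ} (hn : 1 < n) (hnk : n ≤ k)
    (Ω : Matrix (Fin k) (Fin n) ℝ)
    (hrank : Ω.rank = n)
    (hrow : ∀ i, ∑ j, Ω i j ^ 2 = 1)
    (hmin : ∀ Y : Matrix (Fin k) (Fin n) ℝ,
      Y.rank = n → (∀ i, ∑ j, Y i j ^ 2 = 1) → penaltyH Ω ≤ penaltyH Y) :
    ∃ σ : ℝ, 0 < σ ∧ Ωᵀ * Ω = (σ ^ 2) • (1 : Matrix (Fin n) (Fin n) ℝ) := by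
  have hk : 0 < k := by omega
  have hn0 : (0:ℝ) < n := by exact_mod_cast Nat.zero_lt_of_lt hn
  have hk0 : (0:ℝ) < k := by exact_mod_cast hk
  have hlogn : 0 < Real.log n := Real.log_pos (by exact_mod_cast hn)
  set G : Matrix (Fin n) (Fin n) ℝ := Ωᵀ * Ω with hGdef
  have hGT : Ωᴴ * Ω = G := by rw [Matrix.conjTranspose_eq_transpose_of_trivial]
  have hPSD : G.PosSemidef := hGT ▸ Matrix.posSemidef_conjTranspose_mul_self Ω
  have hherm : G.IsHermitian := hPSD.1
  set lam : Fin n → ℝ := hherm.eigenvalues with hlam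
  have hnonneg : ∀ i, 0 ≤ lam i := fun i => hPSD.eigenvalues_nonneg i
  -- rank of G
  have hrankG : G.rank = n := by
    rw [hGdef, Matrix.rank_transpose_mul_self, hrank]
  -- eigenvalues nonzero
  have hpos : ∀ i, 0 < lam i := by
    intro i
    rcases (hnonneg i).lt_or_eq with h | h
    · exact h
    · exfalso
      have hcard := hherm.rank_eq_card_non_zero_eigs
      rw [hrankG] at hcard
      have hlt : Fintype.card {j // hherm.eigenvalues j ≠ 0} < Fintype.card (Fin n) :=
        Fintype.card_subtype_lt (p := fun j => hherm.eigenvalues j ≠ 0) (x := i)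
          (by simpa using h.symm)
      rw [Fintype.card_fin] at hlt
      omega
  -- determinant of G = product of eigenvalues
  have hdet : G.det = ∏ i, lam i := by
    have := hherm.det_eq_prod_eigenvalues
    simpa using this
  have hdetpos : 0 < G.det := hdet ▸ Finset.prod_pos (fun i _ => hpos i)
  -- trace of G = k
  have htr1 : G.trace = (k:ℝ) := by
    rw [Matrix.trace]
    have hdiag : ∀ i, Matrix.diag G i = ∑ m, Ω m i^2 := by
      intro i
      rw [Matrix.diag_apply, hGdef, Matrix.mul_apply]
      exact Finset.sum_congr rfl (fun m _ => by rw [Matrix.transpose_apply, sq])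
    rw [Finset.sum_congr rfl (fun i _ => hdiag i), Finset.sum_comm,
      Finset.sum_congr rfl (fun m _ => hrow m)]
    simp
  have htr2 : G.trace = ∑ i, lam i := by
    conv_lhs => rw [hherm.spectral_theorem]
    rw [Unitary.conjStarAlgAut_apply, Matrix.trace_mul_cycle, Unitary.coe_star_mul_self, Matrix.one_mul,
      Matrix.trace_diagonal]
    simp
    rfl
  have htrace : ∑ i, lam i = (k:ℝ) := htr2 ▸ htr1
  -- penalty of tight frame = 1
  obtain ⟨Y, hYrank, hYrow, hYgram⟩ := exists_tight_frame n k hn hnk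
  have hYpen : penaltyH Y = 1 := by
    rw [penaltyH, hYgram, smul_smul]
    have h1 : (1/(k:ℝ)) * ((k:ℝ)/n) = 1/n := by field_simp
    rw [h1, Matrix.det_smul, Matrix.det_one, mul_one, Fintype.card_fin,
      Real.log_pow, Real.log_div one_ne_zero hn0.ne', Real.log_one]
    field_simp
    ring
  have hineq := hmin Y hYrank hYrow
  rw [hYpen, penaltyH] at hineq
  set L : ℝ := Real.log (((1/(k:ℝ)) • G).det) with hLdef
  have hmul : 0 < (n:ℝ) * Real.log n := by positivity
  have hL : -((n:ℝ) * Real.log n) ≤ L := by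
    by_contra hcon
    push_neg at hcon
    have h2 : L / ((n:ℝ) * Real.log n) < -1 := by
      rw [div_lt_iff₀ hmul]; linarith
    have h3 : -(1/((n:ℝ) * Real.log n)) * L = -(L/((n:ℝ) * Real.log n)) := by ring
    rw [h3] at hineq
    linarith
  -- det ((1/k) • G) ≥ (1/n)^n
  have hdet2 : ((1/(k:ℝ)) • G).det = (1/(k:ℝ))^n * G.det := by
    rw [Matrix.det_smul, Fintype.card_fin]
  have hdet2pos : 0 < ((1/(k:ℝ)) • G).det := by
    rw [hdet2]; positivity
  have hlogpow : Real.log ((1/(n:ℝ))^n) = -((n:ℝ) * Real.log n) := by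
    rw [Real.log_pow, Real.log_div one_ne_zero hn0.ne', Real.log_one]
    ring
  have hdet_ge : (1/(n:ℝ))^n ≤ ((1/(k:ℝ)) • G).det := by
    have h2 : (0:ℝ) < (1/(n:ℝ))^n := by positivity
    refine (Real.log_le_log_iff h2 hdet2pos).mp ?_
    rw [hlogpow]; exact hL
  have hprod_ge : ((k:ℝ)/n)^n ≤ ∏ i, lam i := by
    have h1 : ((k:ℝ))^n * ((1/(k:ℝ))^n * G.det) = G.det := by
      rw [← mul_assoc, ← mul_pow]
      field_simp
      simp
    calc ((k:ℝ)/n)^n = (k:ℝ)^n * (1/(n:ℝ))^n := by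
          rw [div_pow, one_div, inv_pow, div_eq_mul_inv]
      _ ≤ (k:ℝ)^n * ((1/(k:ℝ)) • G).det := by
          have := mul_le_mul_of_nonneg_left hdet_ge (le_of_lt (by positivity : (0:ℝ) < (k:ℝ)^n))
          exact this
      _ = ∏ i, lam i := by rw [hdet2, h1, hdet]
  -- all eigenvalues are equal
  have hall : ∀ a b : Fin n, lam a = lam b := by
    by_contra hcon
    push_neg at hcon
    obtain ⟨a, b, hab⟩ := hcon
    have hjensen := strictConcaveOn_log_Ioi.lt_map_sum
      (w := fun _ : Fin n => 1/(n:ℝ)) (p := lam) (t := Finset.univ)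
      (fun i _ => by positivity)
      (by rw [Finset.sum_const, Finset.card_univ, Fintype.card_fin, nsmul_eq_mul]; field_simp)
      (fun i _ => Set.mem_Ioi.mpr (hpos i))
      ⟨a, Finset.mem_univ a, b, Finset.mem_univ b, hab⟩
    have hsum : ∑ i : Fin n, (1/(n:ℝ)) • lam i = (k:ℝ)/n := by
      rw [← Finset.smul_sum, htrace, smul_eq_mul]
      ring
    have hlogs : ∑ i : Fin n, (1/(n:ℝ)) • Real.log (lam i)
        = (1/(n:ℝ)) * Real.log (∏ i, lam i) := by
      rw [Real.log_prod (fun i _ => (hpos i).ne'), Finset.mul_sum]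
      simp [smul_eq_mul]
    rw [hsum, hlogs] at hjensen
    have hlog_prod : (n:ℝ) * Real.log ((k:ℝ)/n) ≤ Real.log (∏ i, lam i) := by
      have h4 : Real.log (((k:ℝ)/n)^n) ≤ Real.log (∏ i, lam i) :=
        Real.log_le_log (by positivity) hprod_ge
      rwa [Real.log_pow] at h4
    have h5 : Real.log ((k:ℝ)/n) ≤ (1/(n:ℝ)) * Real.log (∏ i, lam i) := by
      calc Real.log ((k:ℝ)/n) = (1/(n:ℝ)) * ((n:ℝ) * Real.log ((k:ℝ)/n)) := by field_simp
        _ ≤ (1/(n:ℝ)) * Real.log (∏ i, lam i) :=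
            mul_le_mul_of_nonneg_left hlog_prod (by positivity)
    linarith
  -- reconstruct G
  have hc : lam ⟨0, by omega⟩ = (k:ℝ)/n := by
    have : ∑ i : Fin n, lam i = ∑ i : Fin n, lam ⟨0, by omega⟩ :=
      Finset.sum_congr rfl (fun i _ => hall i ⟨0, by omega⟩)
    rw [htrace, Finset.sum_const, Finset.card_univ, Fintype.card_fin, nsmul_eq_mul] at this
    field_simp at this ⊢
    linarith [this]
  have hGc : G = ((k:ℝ)/n) • (1 : Matrix (Fin n) (Fin n) ℝ) := by
    have hconst : Matrix.diagonal (RCLike.ofReal ∘ lam)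
        = ((k:ℝ)/n) • (1 : Matrix (Fin n) (Fin n) ℝ) := by
      have hlc : ∀ i, lam i = (k:ℝ)/n := fun i => (hall i ⟨0, by omega⟩).trans hc
      ext i j
      by_cases h : i = j
      · subst h
        simp [Matrix.diagonal_apply_eq, hlc i]
      · simp [Matrix.diagonal_apply_ne _ h, Matrix.one_apply_ne h]
    conv_lhs => rw [hherm.spectral_theorem]
    rw [Unitary.conjStarAlgAut_apply, hconst, Matrix.mul_smul, Matrix.smul_mul, Matrix.mul_one]
    congr 1
    simpa using Unitary.coe_mul_star_self hherm.eigenvectorUnitary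
  refine ⟨Real.sqrt ((k:ℝ)/n), Real.sqrt_pos.mpr (by positivity), ?_⟩
  rw [Real.sq_sqrt (by positivity), ← hGc]
end

section
/- Let X ∈ ℝ^{n×k} (1 < n ≤ k) have unit-norm columns and full rank. Then -log det((1/k)·X·Xᵀ) ≥ n·log(n), so the penalty h(X) = -(1/(n log n))·log det((1/k)XXᵀ) satisfies h(X) ≥ 1. -/
open Matrix

theorem stmt_19 {n k : ℕ} (hn : 1 < n) (hnk : n ≤ k)
    (X : Matrix (Fin n) (Fin k) ℝ)
    (hrank : X.rank = n)
    (hcol : ∀ j, ∑ i, X i j ^ 2 = 1) :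
    (n : ℝ) * Real.log n ≤ -Real.log (((1 / (k : ℝ)) • (X * Xᵀ)).det) ∧
    1 ≤ -(1 / ((n : ℝ) * Real.log n)) * Real.log (((1 / (k : ℝ)) • (X * Xᵀ)).det) := by
  have hn0 : (0:ℝ) < n := by positivity
  have hk0 : (0:ℝ) < k := by
    have : 0 < k := lt_of_lt_of_le (Nat.lt_of_lt_of_le Nat.zero_lt_one hn.le) hnk
    exact_mod_cast this
  have hA : (X * Xᵀ).IsHermitian := by
    simpa using X.isHermitian_mul_conjTranspose_self
  have hPSD : (X * Xᵀ).PosSemidef := by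
    simpa using X.posSemidef_self_mul_conjTranspose
  set μ : Fin n → ℝ := hA.eigenvalues with hμ
  have hμ0 : ∀ i, 0 ≤ μ i := fun i => hPSD.eigenvalues_nonneg i
  -- all eigenvalues are nonzero
  have hμne : ∀ i, μ i ≠ 0 := by
    intro i hi
    have hr : (X * Xᵀ).rank = n := by rw [X.rank_self_mul_transpose, hrank]
    have hcard : Fintype.card {j // μ j ≠ 0} = n := by
      exact hA.rank_eq_card_non_zero_eigs.symm.trans hr
    have hlt : Fintype.card {j // μ j ≠ 0} < Fintype.card (Fin n) :=
      Fintype.card_subtype_lt (x := i) (by simpa using hi)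
    simp only [Fintype.card_fin] at hlt
    omega
  have hμpos : ∀ i, 0 < μ i := fun i => lt_of_le_of_ne (hμ0 i) (Ne.symm (hμne i))
  -- trace computations
  have htrace1 : (X * Xᵀ).trace = (k : ℝ) := by
    have h : (X * Xᵀ).trace = ∑ i : Fin n, ∑ j : Fin k, X i j ^ 2 := by
      simp [Matrix.trace, Matrix.diag, Matrix.mul_apply, sq]
    rw [h, Finset.sum_comm]
    simp [hcol]
  have htrace2 : (X * Xᵀ).trace = ∑ i, μ i := by
    conv_lhs => rw [hA.spectral_theorem]
    rw [Unitary.conjStarAlgAut_apply, Matrix.trace_mul_cycle, Unitary.coe_star_mul_self, one_mul]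
    simp [Matrix.trace_diagonal, hμ]
  have hsum : ∑ i, μ i = (k : ℝ) := by rw [← htrace2, htrace1]
  have hdet : (X * Xᵀ).det = ∏ i, μ i := by
    simpa using hA.det_eq_prod_eigenvalues
  -- AM-GM: ∏ μ ≤ (k/n)^n
  have hamgm : ∏ i, μ i ≤ ((k : ℝ) / n) ^ n := by
    have h1 : ∏ i, μ i ^ ((n : ℝ)⁻¹) ≤ ∑ i, (n : ℝ)⁻¹ * μ i :=
      Real.geom_mean_le_arith_mean_weighted Finset.univ (fun _ => (n : ℝ)⁻¹) μ
        (fun i _ => by positivity)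
        (by simp [Finset.card_univ]; field_simp)
        (fun i _ => hμ0 i)
    have h2 : ∑ i, (n : ℝ)⁻¹ * μ i = (k : ℝ) / n := by
      rw [← Finset.mul_sum, hsum]; ring
    have h3 : ∏ i, μ i = (∏ i, μ i ^ ((n : ℝ)⁻¹)) ^ n := by
      rw [← Finset.prod_pow]
      refine Finset.prod_congr rfl fun i _ => ?_
      rw [← Real.rpow_natCast (μ i ^ ((n:ℝ)⁻¹)) n, ← Real.rpow_mul (hμ0 i)]
      rw [inv_mul_cancel₀ (ne_of_gt hn0), Real.rpow_one]
    rw [h3]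
    have hb : 0 ≤ ∏ i, μ i ^ ((n : ℝ)⁻¹) :=
      Finset.prod_nonneg fun i _ => Real.rpow_nonneg (hμ0 i) _
    calc (∏ i, μ i ^ ((n : ℝ)⁻¹)) ^ n ≤ (∑ i, (n : ℝ)⁻¹ * μ i) ^ n :=
          pow_le_pow_left₀ hb h1 n
      _ = ((k : ℝ) / n) ^ n := by rw [h2]
  -- determinant of scaled matrix
  set D : ℝ := ((1 / (k : ℝ)) • (X * Xᵀ)).det with hD
  have hDval : D = (1 / (k : ℝ)) ^ n * ∏ i, μ i := by
    rw [hD, Matrix.det_smul, hdet, Fintype.card_fin]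
  have hDpos : 0 < D := by
    rw [hDval]
    exact mul_pos (by positivity) (Finset.prod_pos fun i _ => hμpos i)
  have hDle : D ≤ (1 / (n : ℝ)) ^ n := by
    rw [hDval]
    calc (1 / (k : ℝ)) ^ n * ∏ i, μ i ≤ (1 / (k : ℝ)) ^ n * ((k : ℝ) / n) ^ n :=
          mul_le_mul_of_nonneg_left hamgm (by positivity)
      _ = (1 / (n : ℝ)) ^ n := by
          rw [← mul_pow]; congr 1; field_simp
  -- take logs
  have hlogn : 0 < Real.log n := Real.log_pos (by exact_mod_cast hn)
  have hmain : (n : ℝ) * Real.log n ≤ -Real.log D := by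
    have h := Real.log_le_log hDpos hDle
    have : Real.log ((1 / (n : ℝ)) ^ n) = -((n : ℝ) * Real.log n) := by
      rw [Real.log_pow, one_div, Real.log_inv]; ring
    linarith [h, this ▸ h]
  refine ⟨hmain, ?_⟩
  have hc : 0 < (n : ℝ) * Real.log n := mul_pos hn0 hlogn
  have heq : -(1 / ((n : ℝ) * Real.log n)) * Real.log D
      = (-Real.log D) / ((n : ℝ) * Real.log n) := by ring
  rw [heq, one_le_div hc]
  exact hmain
end
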